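/- arXiv:2602.14859 — 4 statements merged into one kernel-verified Lean document; each statement's English description precedes it below -/
import Mathlib

section
/- Let f(z) = ∑_{n≥1} a_n z^n be a power series with nonnegative real coefficients, a_0 = 0, a_1 = 1, and radius of convergence r with 0 < r < 1. Then for every integer i ≥ 2 and every real x with 0 ≤ x < r^(1/2), we have f(x^i) ≤ f(x^2)^(i/2). -/
theorem stmt_3 (a : ℕ → ℝ) (ha : ∀ n, 0 ≤ a n) (ha0 : a 0 = 0) (ha1 : a 1 = 1)
    (r : ℝ) (hr0 : 0 < r) (hr1 : r < 1)
    (hconv : ∀ x : ℝ, |x| < r → Summable (fun n => a n * x ^ n))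
    (hdiv : ∀ x : ℝ, r < x → ¬ Summable (fun n => a n * x ^ n)) :
    ∀ i : ℕ, 2 ≤ i → ∀ x : ℝ, 0 ≤ x → x < r ^ ((1 : ℝ) / 2) →
      (∑' n, a n * (x ^ i) ^ n) ≤ (∑' n, a n * (x ^ 2) ^ n) ^ ((i : ℝ) / 2) := by
  intro i hi x hx hxr
  rcases eq_or_lt_of_le hx with h0 | h0
  · -- x = 0
    have hi0 : i ≠ 0 := by omega
    have h1 : (∑' n, a n * (x ^ i) ^ n) = 0 := by
      have : (fun n : ℕ => a n * (x ^ i) ^ n) = fun _ => 0 := by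
        funext n
        rcases Nat.eq_zero_or_pos n with hn | hn
        · simp [hn, ha0]
        · rw [← h0]; simp [zero_pow hi0, zero_pow hn.ne']
      rw [this, tsum_zero]
    rw [h1]
    exact Real.rpow_nonneg (by
      apply tsum_nonneg
      intro n
      exact mul_nonneg (ha n) (pow_nonneg (pow_nonneg hx 2) n)) _
  · -- x > 0
    have hx1 : x < 1 := lt_of_lt_of_le hxr
      (le_of_lt (Real.rpow_lt_one hr0.le hr1 (by norm_num)))
    have hx2r : x ^ 2 < r := by
      have h := pow_lt_pow_left₀ hxr hx two_ne_zero
      rwa [← Real.rpow_natCast (r ^ ((1:ℝ)/2)) 2, ← Real.rpow_mul hr0.le, show (1:ℝ)/2 * (2:ℕ) = 1 by push_cast; ring, Real.rpow_one] at h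
    have hS2 : Summable (fun n => a n * (x ^ 2) ^ n) := by
      apply hconv
      rwa [abs_of_nonneg (pow_nonneg hx 2)]
    have hxi2 : x ^ i ≤ x ^ 2 := pow_le_pow_of_le_one hx hx1.le hi
    have hSi : Summable (fun n => a n * (x ^ i) ^ n) := by
      apply hconv
      rw [abs_of_nonneg (pow_nonneg hx i)]
      exact lt_of_le_of_lt hxi2 hx2r
    set S := ∑' n, a n * (x ^ 2) ^ n with hSdef
    have hx2S : x ^ 2 ≤ S := by
      have := Summable.le_tsum hS2 1 (fun n _ => mul_nonneg (ha n) (pow_nonneg (pow_nonneg hx 2) n))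
      simpa [ha1] using this
    have hSpos : 0 < S := lt_of_lt_of_le (pow_pos h0 2) hx2S
    set p : ℝ := ((i : ℝ) - 2) / 2 with hpdef
    have hp : 0 ≤ p := by
      have : (2:ℝ) ≤ (i:ℝ) := by exact_mod_cast hi
      unfold p; linarith
    -- key pointwise bound
    have key : ∀ n : ℕ, a n * (x ^ i) ^ n ≤ S ^ p * (a n * (x ^ 2) ^ n) := by
      intro n
      rcases Nat.eq_zero_or_pos n with hn | hn
      · simp [hn, ha0]
      · have h1 : (x ^ i) ^ n = (x ^ 2) ^ n * (x ^ (i - 2)) ^ n := by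
          have hi2 : 2 + (i - 2) = i := by omega
          rw [← mul_pow, ← pow_add, hi2]
        have h2 : (x ^ (i - 2)) ^ n ≤ x ^ (i - 2) := by
          calc (x ^ (i - 2)) ^ n ≤ (x ^ (i - 2)) ^ 1 :=
                pow_le_pow_of_le_one (pow_nonneg hx _) (pow_le_one₀ hx hx1.le) hn
            _ = x ^ (i - 2) := pow_one _
        have h3 : x ^ (i - 2) = (x ^ 2 : ℝ) ^ p := by
          rw [← Real.rpow_natCast x 2, ← Real.rpow_natCast x (i - 2), ← Real.rpow_mul hx]
          congr 1
          have : ((i - 2 : ℕ) : ℝ) = (i : ℝ) - 2 := by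
            push_cast [Nat.cast_sub hi]; ring
          rw [this]; unfold p; push_cast; ring
        have h4 : (x ^ 2 : ℝ) ^ p ≤ S ^ p :=
          Real.rpow_le_rpow (pow_nonneg hx 2) hx2S hp
        calc a n * (x ^ i) ^ n = a n * (x ^ 2) ^ n * (x ^ (i - 2)) ^ n := by
              rw [h1]; ring
          _ ≤ a n * (x ^ 2) ^ n * S ^ p := by
              apply mul_le_mul_of_nonneg_left _ (mul_nonneg (ha n) (pow_nonneg (pow_nonneg hx 2) n))
              exact le_trans h2 (h3 ▸ h4)
          _ = S ^ p * (a n * (x ^ 2) ^ n) := by ring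
    have hsum : (∑' n, a n * (x ^ i) ^ n) ≤ ∑' n, S ^ p * (a n * (x ^ 2) ^ n) :=
      Summable.tsum_le_tsum key hSi (hS2.mul_left _)
    rw [tsum_mul_left] at hsum
    calc (∑' n, a n * (x ^ i) ^ n) ≤ S ^ p * S := hsum
      _ = S ^ p * S ^ (1:ℝ) := by rw [Real.rpow_one]
      _ = S ^ (p + 1) := (Real.rpow_add hSpos _ _).symm
      _ = S ^ ((i : ℝ) / 2) := by congr 1; unfold p; ring
end

section
/- Let B and C be formal power series with zero constant term satisfying B = z(1 + B^2) and C = z(1 + C^4/(1 - C^2)) (equivalently (1 - C^2)·C = z·((1 - C^2) + C^4)). Then B - C = C^3/(1 - C^2) = C^3 + C^5 + C^7 + ⋯; in particular every coefficient of C is at most the corresponding coefficient of B. -/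
open PowerSeries

private lemma pos_mul_aux {f g : PowerSeries ℝ} {n : ℕ}
    (hf : ∀ m ≤ n, 0 ≤ coeff m f) (hg : ∀ m ≤ n, 0 ≤ coeff m g) :
    ∀ m ≤ n, 0 ≤ coeff m (f * g) := by
  intro m hm
  rw [coeff_mul]
  apply Finset.sum_nonneg
  intro p hp
  rw [Finset.HasAntidiagonal.mem_antidiagonal] at hp
  exact mul_nonneg (hf p.1 (by omega)) (hg p.2 (by omega))

theorem stmt_5 (B C : PowerSeries ℝ)
    (hB0 : constantCoeff B = 0) (hC0 : constantCoeff C = 0)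
    (hB : B = X * (1 + B ^ 2))
    (hC : (1 - C ^ 2) * C = X * ((1 - C ^ 2) + C ^ 4)) :
    (1 - C ^ 2) * (B - C) = C ^ 3 ∧
    (∀ n : ℕ, coeff n C ≤ coeff n B) := by
  have hC2 : constantCoeff (1 - C ^ 2) ≠ 0 := by simp [hC0]
  set E : PowerSeries ℝ := (1 - C ^ 2)⁻¹ with hEdef
  have hE : (1 - C ^ 2) * E = 1 := PowerSeries.mul_inv_cancel _ hC2
  have hSne : (1 - C ^ 2) ≠ 0 := by
    intro h; exact hC2 (by rw [h]; simp)
  -- C * E satisfies the same equation as B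
  have hD : C * E = X * (1 + (C * E) ^ 2) := by
    have key : (1 - C ^ 2) ^ 2 * (C * E - X * (1 + (C * E) ^ 2)) = 0 := by
      calc (1 - C ^ 2) ^ 2 * (C * E - X * (1 + (C * E) ^ 2))
          = ((1 - C ^ 2) * E) * ((1 - C ^ 2) * C)
            - X * ((1 - C ^ 2) ^ 2 + (((1 - C ^ 2) * E) * C) ^ 2) := by ring
        _ = (1 - C ^ 2) * C - X * ((1 - C ^ 2) ^ 2 + C ^ 2) := by rw [hE]; ring
        _ = X * ((1 - C ^ 2) + C ^ 4) - X * ((1 - C ^ 2) ^ 2 + C ^ 2) := by rw [hC]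
        _ = 0 := by ring
    rcases mul_eq_zero.mp key with h | h
    · exact absurd h (pow_ne_zero _ hSne)
    · exact sub_eq_zero.mp h
  -- uniqueness: B = C * E
  have e1 : B - C * E = X * (B + C * E) * (B - C * E) := by
    conv_lhs => rw [hB, hD]
    ring
  have h0 : (1 - X * (B + C * E)) * (B - C * E) = 0 := by linear_combination e1
  have hu : (1 - X * (B + C * E)) ≠ 0 := by
    intro h
    have := congrArg (constantCoeff) h
    simp at this
  have hBCE : B = C * E := by
    rcases mul_eq_zero.mp h0 with h | h
    · exact absurd h hu
    · exact sub_eq_zero.mp h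
  -- part 1
  have part1 : (1 - C ^ 2) * (B - C) = C ^ 3 := by
    linear_combination (1 - C ^ 2) * hBCE + C * hE
  refine ⟨part1, ?_⟩
  -- B - C = C^2 * B
  have hBC2 : B - C = C ^ 2 * B := by
    linear_combination (1 - C ^ 2) * hBCE + C * hE
  -- nonnegativity of coefficients of B
  have hBpos : ∀ n, 0 ≤ coeff n B := by
    intro n
    induction n using Nat.strong_induction_on with
    | _ n ih =>
      match n, ih with
      | 0, _ => simp [coeff_zero_eq_constantCoeff, hB0]
      | (n+1), ih =>
        rw [hB, coeff_succ_X_mul, map_add]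
        have h1 : 0 ≤ coeff n (1 : PowerSeries ℝ) := by
          rw [coeff_one]; split <;> norm_num
        have h2 : 0 ≤ coeff n (B ^ 2) := by
          have hb : ∀ m ≤ n, 0 ≤ coeff m B := fun m hm => ih m (by omega)
          have : B ^ 2 = B * B := by ring
          rw [this]
          exact pos_mul_aux hb hb n le_rfl
        linarith
  -- X divides C
  obtain ⟨D, hXD⟩ : (X : PowerSeries ℝ) ∣ C := X_dvd_iff.mpr hC0
  have hd : ∀ m, coeff m D = coeff (m+1) C := by
    intro m; rw [hXD, coeff_succ_X_mul]
  -- functional equations for C and E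
  have hCeq : C = X + X * (C ^ 4 * E) := by
    linear_combination E * hC + (X - C) * hE
  have hEeq : E = 1 + X * (D * (C * E)) := by
    linear_combination hE + C * E * hXD
  have he0 : constantCoeff E = 1 := by
    have := congrArg (constantCoeff) hE
    simpa [hC0] using this
  -- joint nonnegativity of coefficients of C and E
  have step : ∀ n : ℕ, (∀ m ≤ n, 0 ≤ coeff m C ∧ 0 ≤ coeff m E) →
      0 ≤ coeff (n+1) C ∧ 0 ≤ coeff (n+1) E := by
    intro n ih
    have hc : ∀ m ≤ n, 0 ≤ coeff m C := fun m hm => (ih m hm).1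
    have he : ∀ m ≤ n, 0 ≤ coeff m E := fun m hm => (ih m hm).2
    have hCn : 0 ≤ coeff (n+1) C := by
      rw [hCeq, map_add, coeff_succ_X_mul]
      have h1 : 0 ≤ coeff (n+1) (X : PowerSeries ℝ) := by
        rw [coeff_X]; split <;> norm_num
      have h2 : 0 ≤ coeff n (C ^ 4 * E) := by
        have h4 : C ^ 4 * E = C * (C * (C * (C * E))) := by ring
        rw [h4]
        exact pos_mul_aux hc (pos_mul_aux hc (pos_mul_aux hc (pos_mul_aux hc he))) n le_rfl
      linarith
    refine ⟨hCn, ?_⟩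
    have hc' : ∀ m ≤ n+1, 0 ≤ coeff m C := by
      intro m hm
      rcases Nat.lt_or_ge m (n+1) with h | h
      · exact hc m (by omega)
      · have : m = n+1 := by omega
        rw [this]; exact hCn
    have hdpos : ∀ m ≤ n, 0 ≤ coeff m D := by
      intro m hm
      rw [hd m]
      exact hc' (m+1) (by omega)
    rw [hEeq, map_add, coeff_succ_X_mul]
    have h1 : 0 ≤ coeff (n+1) (1 : PowerSeries ℝ) := by
      rw [coeff_one]; split <;> norm_num
    have h2 : 0 ≤ coeff n (D * (C * E)) :=
      pos_mul_aux hdpos (pos_mul_aux hc he) n le_rfl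
    linarith
  have hCpos : ∀ n, 0 ≤ coeff n C ∧ 0 ≤ coeff n E := by
    intro n
    induction n using Nat.strong_induction_on with
    | _ n ih =>
      match n, ih with
      | 0, _ =>
        constructor
        · simp [coeff_zero_eq_constantCoeff, hC0]
        · rw [coeff_zero_eq_constantCoeff, he0]; norm_num
      | (n+1), ih => exact step n (fun m hm => ih m (by omega))
  -- conclude
  intro n
  have h2 : 0 ≤ coeff n (C ^ 2 * B) := by
    have hsq : C ^ 2 * B = C * (C * B) := by ring
    rw [hsq]
    exact pos_mul_aux (fun m _ => (hCpos m).1)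
      (pos_mul_aux (fun m _ => (hCpos m).1) (fun m _ => hBpos m)) n le_rfl
  have h3 : coeff n (B - C) = coeff n B - coeff n C := by
    simp [map_sub]
  have := congrArg (coeff n) hBC2
  rw [h3] at this
  linarith
end

section
/- Let B and C be as above (ordinary generating functions of full binary ordered trees and of ordered trees with all internal outdegrees even and at least 4, respectively). Eliminating z between B = z(1+B^2) and C = z(1 + C^4/(1-C^2)) yields the identity (C^2 + C·B - 1)·(C^2·B + C - B) = 0 in the ring of formal power series, and since C^2 + C·B - 1 is a unit, B = C/(1 - C^2). -/
open PowerSeries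

theorem stmt_6 (B C : PowerSeries ℝ)
    (hB0 : constantCoeff B = 0) (hC0 : constantCoeff C = 0)
    (hB : B = X * (1 + B ^ 2))
    (hC : (1 - C ^ 2) * C = X * ((1 - C ^ 2) + C ^ 4)) :
    (C ^ 2 + C * B - 1) * (C ^ 2 * B + C - B) = 0 ∧
    IsUnit (C ^ 2 + C * B - 1) ∧
    B * (1 - C ^ 2) = C := by
  have h1 : (C ^ 2 + C * B - 1) * (C ^ 2 * B + C - B) = 0 := by
    linear_combination ((1 : PowerSeries ℝ) - C ^ 2 + C ^ 4) * hB - (1 + B ^ 2) * hC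
  have h2 : IsUnit (C ^ 2 + C * B - 1) := by
    rw [PowerSeries.isUnit_iff_constantCoeff]
    simp [hB0, hC0]
  refine ⟨h1, h2, ?_⟩
  obtain ⟨u, hu⟩ := h2
  have h3 : C ^ 2 * B + C - B = 0 := by
    have := congrArg (fun x => (↑u⁻¹ : PowerSeries ℝ) * x) h1
    simpa [← hu, ← mul_assoc] using this
  linear_combination -h3
end

section
/- Let T(z) be a formal power series with zero constant term satisfying T(z) = (z/2)·exp(∑_{j≥1} T(z^j)/j) + (z/2)·exp(∑_{j≥1} (-1)^j T(z^j)/j) - (z/2)·(T(z)^2 + T(z^2)). Then the coefficients of T are uniquely determined by this equation, and [z^1]T = 1, [z^n]T = 0 for even n, and [z^5]T = 1. -/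
open PowerSeries

/-- Substitution `z ↦ z^j` (for `j ≥ 1`) into a formal power series:
`[z^n] T(z^j) = [z^{n/j}] T` if `j ∣ n`, and `0` otherwise. -/
noncomputable def substPow (j : ℕ) (T : PowerSeries ℚ) : PowerSeries ℚ :=
  PowerSeries.mk fun n => if j ∣ n then coeff (n / j) T else 0

/-- Truncation (sufficient for the coefficient of `z^N`, since `T` has zero constant
term) of `(z/2)·exp(∑_{j≥1} T(z^j)/j) + (z/2)·exp(∑_{j≥1} (-1)^j T(z^j)/j)
- (z/2)·(T(z)² + T(z²))`. -/
noncomputable def truncRHS (T : PowerSeries ℚ) (N : ℕ) : PowerSeries ℚ :=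
  let S₁ : PowerSeries ℚ := ∑ j ∈ Finset.Icc 1 N, ((1 : ℚ) / j) • substPow j T
  let S₂ : PowerSeries ℚ := ∑ j ∈ Finset.Icc 1 N, ((-1 : ℚ) ^ j / j) • substPow j T
  let E₁ : PowerSeries ℚ := ∑ k ∈ Finset.range (N + 1), ((1 : ℚ) / (Nat.factorial k)) • S₁ ^ k
  let E₂ : PowerSeries ℚ := ∑ k ∈ Finset.range (N + 1), ((1 : ℚ) / (Nat.factorial k)) • S₂ ^ k
  ((1 : ℚ) / 2) • (X * E₁) + ((1 : ℚ) / 2) • (X * E₂)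
    - ((1 : ℚ) / 2) • (X * (T ^ 2 + substPow 2 T))

/-- `T` has zero constant term and satisfies the functional equation of
unordered rooted trees with all outdegrees even and `≥ 4`. -/
def SatisfiesTreeEq (T : PowerSeries ℚ) : Prop :=
  constantCoeff T = 0 ∧ ∀ N : ℕ, coeff N T = coeff N (truncRHS T N)

namespace TreeAux

noncomputable def S1 (T : PowerSeries ℚ) (N : ℕ) : PowerSeries ℚ :=
  ∑ j ∈ Finset.Icc 1 N, ((1 : ℚ) / j) • substPow j T

noncomputable def S2 (T : PowerSeries ℚ) (N : ℕ) : PowerSeries ℚ :=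
  ∑ j ∈ Finset.Icc 1 N, ((-1 : ℚ) ^ j / j) • substPow j T

noncomputable def E1 (T : PowerSeries ℚ) (N : ℕ) : PowerSeries ℚ :=
  ∑ k ∈ Finset.range (N + 1), ((1 : ℚ) / (Nat.factorial k)) • (S1 T N) ^ k

noncomputable def E2 (T : PowerSeries ℚ) (N : ℕ) : PowerSeries ℚ :=
  ∑ k ∈ Finset.range (N + 1), ((1 : ℚ) / (Nat.factorial k)) • (S2 T N) ^ k

lemma truncRHS_eq (T : PowerSeries ℚ) (N : ℕ) :
    truncRHS T N = ((1 : ℚ) / 2) • (X * E1 T N) + ((1 : ℚ) / 2) • (X * E2 T N)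
      - ((1 : ℚ) / 2) • (X * (T ^ 2 + substPow 2 T)) := rfl

lemma coeff_substPow (j n : ℕ) (T : PowerSeries ℚ) :
    coeff n (substPow j T) = if j ∣ n then coeff (n / j) T else 0 := by
  simp [substPow]

lemma coeff_truncRHS_succ (T : PowerSeries ℚ) (n : ℕ) :
    coeff (n + 1) (truncRHS T (n + 1)) =
      ((1 : ℚ) / 2) * coeff n (E1 T (n + 1)) + ((1 : ℚ) / 2) * coeff n (E2 T (n + 1))
        - ((1 : ℚ) / 2) * coeff n (T ^ 2 + substPow 2 T) := by
  rw [truncRHS_eq]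
  simp [coeff_succ_X_mul]

section Rel

variable {ε : ℕ → ℚ}

lemma rel_mul (hε : ∀ i k, ε (i + k) = ε i * ε k) {N : ℕ} {A A' B B' : PowerSeries ℚ}
    (hA : ∀ m < N, coeff m A' = ε m * coeff m A)
    (hB : ∀ m < N, coeff m B' = ε m * coeff m B) :
    ∀ m < N, coeff m (A' * B') = ε m * coeff m (A * B) := by
  intro m hm
  rw [coeff_mul, coeff_mul, Finset.mul_sum]
  refine Finset.sum_congr rfl ?_
  intro p hp
  rw [Finset.HasAntidiagonal.mem_antidiagonal] at hp
  have h1 : p.1 < N := lt_of_le_of_lt (by omega) hm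
  have h2 : p.2 < N := lt_of_le_of_lt (by omega) hm
  rw [hA _ h1, hB _ h2, ← hp, hε]
  ring

lemma rel_pow (hε0 : ε 0 = 1) (hε : ∀ i k, ε (i + k) = ε i * ε k) {N : ℕ} {A A' : PowerSeries ℚ}
    (hA : ∀ m < N, coeff m A' = ε m * coeff m A) (k : ℕ) :
    ∀ m < N, coeff m (A' ^ k) = ε m * coeff m (A ^ k) := by
  induction k with
  | zero =>
    intro m hm
    simp only [pow_zero, coeff_one]
    split
    · next h => subst h; rw [hε0, one_mul]
    · ring
  | succ k ih =>
    intro m hm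
    rw [pow_succ, pow_succ]
    exact rel_mul hε ih hA m hm

lemma rel_E (hε0 : ε 0 = 1) (hε : ∀ i k, ε (i + k) = ε i * ε k) {N M : ℕ} {A A' : PowerSeries ℚ}
    (hA : ∀ m < N, coeff m A' = ε m * coeff m A) :
    ∀ m < N, coeff m (∑ k ∈ Finset.range M, ((1 : ℚ) / (Nat.factorial k)) • A' ^ k)
      = ε m * coeff m (∑ k ∈ Finset.range M, ((1 : ℚ) / (Nat.factorial k)) • A ^ k) := by
  intro m hm
  rw [map_sum, map_sum, Finset.mul_sum]
  refine Finset.sum_congr rfl ?_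
  intro k _
  rw [map_smul, map_smul, smul_eq_mul, smul_eq_mul, rel_pow hε0 hε hA k m hm]
  ring

end Rel

lemma agree_substPow {N : ℕ} {T T' : PowerSeries ℚ}
    (h : ∀ k < N, coeff k T' = coeff k T) (j : ℕ) :
    ∀ m < N, coeff m (substPow j T') = coeff m (substPow j T) := by
  intro m hm
  rw [coeff_substPow, coeff_substPow]
  split
  · exact h _ (lt_of_le_of_lt (Nat.div_le_self m j) hm)
  · rfl

lemma agree_S {N : ℕ} {T T' : PowerSeries ℚ} (c : ℕ → ℚ)
    (h : ∀ k < N, coeff k T' = coeff k T) :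
    ∀ m < N, coeff m (∑ j ∈ Finset.Icc 1 N, (c j) • substPow j T')
      = coeff m (∑ j ∈ Finset.Icc 1 N, (c j) • substPow j T) := by
  intro m hm
  rw [map_sum, map_sum]
  refine Finset.sum_congr rfl ?_
  intro j _
  rw [map_smul, map_smul, agree_substPow h j m hm]

/-- Key lemma: the `N`-th coefficient of `truncRHS T N` depends only on the
coefficients of `T` of index `< N`. -/
lemma agree_truncRHS {N : ℕ} {T T' : PowerSeries ℚ}
    (h : ∀ k < N, coeff k T' = coeff k T) :
    coeff N (truncRHS T' N) = coeff N (truncRHS T N) := by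
  have hone : ∀ i k : ℕ, (1 : ℚ) = 1 * 1 := by intro i k; ring
  rcases N with _ | n
  · rw [truncRHS_eq, truncRHS_eq]
    simp
  · have hε0 : (fun _ : ℕ => (1 : ℚ)) 0 = 1 := rfl
    have hε : ∀ i k : ℕ, (fun _ : ℕ => (1 : ℚ)) (i + k)
        = (fun _ : ℕ => (1 : ℚ)) i * (fun _ : ℕ => (1 : ℚ)) k := by intro i k; simp
    have hS1 : ∀ m < n + 1, coeff m (S1 T' (n + 1)) = (fun _ : ℕ => (1 : ℚ)) m * coeff m (S1 T (n + 1)) := by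
      intro m hm
      rw [one_mul]
      exact agree_S (fun j => (1 : ℚ) / j) h m hm
    have hS2 : ∀ m < n + 1, coeff m (S2 T' (n + 1)) = (fun _ : ℕ => (1 : ℚ)) m * coeff m (S2 T (n + 1)) := by
      intro m hm
      rw [one_mul]
      exact agree_S (fun j => (-1 : ℚ) ^ j / j) h m hm
    have hε0 : (fun _ : ℕ => (1 : ℚ)) 0 = 1 := rfl
    have hε : ∀ i k : ℕ, (fun _ : ℕ => (1 : ℚ)) (i + k)
        = (fun _ : ℕ => (1 : ℚ)) i * (fun _ : ℕ => (1 : ℚ)) k := fun i k => by norm_num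
    have hE1 := rel_E (ε := fun _ : ℕ => (1 : ℚ)) hε0 hε hS1 (M := n + 2)
    have hE2 := rel_E (ε := fun _ : ℕ => (1 : ℚ)) hε0 hε hS2 (M := n + 2)
    have hmlt : n < n + 1 := Nat.lt_succ_self n
    rw [coeff_truncRHS_succ, coeff_truncRHS_succ]
    have e1 : coeff n (E1 T' (n + 1)) = coeff n (E1 T (n + 1)) := by
      have := hE1 n hmlt; rwa [one_mul] at this
    have e2 : coeff n (E2 T' (n + 1)) = coeff n (E2 T (n + 1)) := by
      have := hE2 n hmlt; rwa [one_mul] at this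
    have esq : coeff n (T' ^ 2) = coeff n (T ^ 2) := by
      have := rel_pow (ε := fun _ : ℕ => (1 : ℚ)) hε0 hε
        (fun m hm => by simpa using h m hm) 2 n hmlt
      simpa using this
    have esub : coeff n (substPow 2 T') = coeff n (substPow 2 T) := agree_substPow h 2 n hmlt
    rw [e1, e2, map_add, map_add, esq, esub]

lemma uniqueness {T T' : PowerSeries ℚ} (hT : SatisfiesTreeEq T) (hT' : SatisfiesTreeEq T') :
    T' = T := by
  ext n
  induction n using Nat.strong_induction_on with
  | _ n ih =>
    rw [hT.2 n, hT'.2 n]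
    exact agree_truncRHS ih

lemma even_coeff {T : PowerSeries ℚ} (hT : SatisfiesTreeEq T) :
    ∀ n : ℕ, Even n → coeff n T = 0 := by
  intro n
  induction n using Nat.strong_induction_on with
  | _ n ih =>
    intro hn
    rcases n with _ | m
    · simpa using hT.1
    · -- n = m + 1 even, so m is odd
      have hmodd : Odd m := by
        rcases hn with ⟨r, hr⟩
        exact ⟨r - 1, by omega⟩
      rw [hT.2, coeff_truncRHS_succ]
      set N := m + 1 with hN
      -- negation relation between S2 and S1
      have hS : ∀ mm < N, coeff mm (S2 T N) = (-1 : ℚ) ^ mm * coeff mm (S1 T N) := by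
        intro mm hmm
        rw [S1, S2, map_sum, map_sum, Finset.mul_sum]
        refine Finset.sum_congr rfl ?_
        intro j hj
        rw [map_smul, map_smul, smul_eq_mul, smul_eq_mul, coeff_substPow]
        split
        · next hdvd =>
          by_cases hz : coeff (mm / j) T = 0
          · rw [hz]; ring
          · -- mm / j must be odd
            have hodd : Odd (mm / j) := by
              rcases Nat.even_or_odd (mm / j) with he | ho
              · exact absurd (ih _ (lt_of_le_of_lt (Nat.div_le_self mm j) hmm) he) hz
              · exact ho
            have hmmj : j * (mm / j) = mm := Nat.mul_div_cancel' hdvd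
            have hpar : (-1 : ℚ) ^ mm = (-1 : ℚ) ^ j := by
              rcases Nat.even_or_odd j with hje | hjo
              · have : Even mm := by
                  rw [← hmmj]; exact hje.mul_right _
                rw [Even.neg_one_pow hje, Even.neg_one_pow this]
              · have : Odd mm := by
                  rw [← hmmj]; exact hjo.mul hodd
                rw [Odd.neg_one_pow hjo, Odd.neg_one_pow this]
            rw [hpar]
            ring
        · ring
      have hE := rel_E (ε := fun mm => (-1 : ℚ) ^ mm) (by norm_num)
        (fun i k => by simp [pow_add]) hS (M := N + 1)
      have hE2m : coeff m (E2 T N) = - coeff m (E1 T N) := by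
        have h2 : coeff m (∑ k ∈ Finset.range (N + 1), ((1 : ℚ) / (Nat.factorial k)) • S2 T N ^ k)
            = (-1 : ℚ) ^ m * coeff m (∑ k ∈ Finset.range (N + 1), ((1 : ℚ) / (Nat.factorial k)) • S1 T N ^ k) :=
          hE m (Nat.lt_succ_self m)
        rw [E1, E2, h2, Odd.neg_one_pow hmodd]
        ring
      have hsq : coeff m (T ^ 2) = 0 := by
        rw [pow_two, coeff_mul]
        refine Finset.sum_eq_zero ?_
        intro p hp
        rw [Finset.HasAntidiagonal.mem_antidiagonal] at hp
        rcases Nat.even_or_odd p.1 with he | ho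
        · rw [ih p.1 (by omega) he, zero_mul]
        · have he2 : Even p.2 := by
            rcases hmodd with ⟨r, hr⟩
            rcases ho with ⟨s, hs⟩
            exact ⟨(r - s), by omega⟩
          rw [ih p.2 (by omega) he2, mul_zero]
      have hsub : coeff m (substPow 2 T) = 0 := by
        rw [coeff_substPow]
        have : ¬ (2 ∣ m) := by
          rcases hmodd with ⟨r, hr⟩
          omega
        simp [this]
      rw [map_add, hsq, hsub, hE2m]
      ring

end TreeAux

set_option maxHeartbeats 2000000 in
theorem stmt_16 (T : PowerSeries ℚ) (hT : SatisfiesTreeEq T) :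
    (∀ T' : PowerSeries ℚ, SatisfiesTreeEq T' → T' = T) ∧
    coeff 1 T = 1 ∧ (∀ n : ℕ, Even n → coeff n T = 0) ∧ coeff 5 T = 1 := by
  have ht0 : coeff 0 T = 0 := by simpa using hT.1
  have heven := TreeAux.even_coeff hT
  have ht2 : coeff 2 T = 0 := heven 2 ⟨1, rfl⟩
  have ht4 : coeff 4 T = 0 := heven 4 ⟨2, rfl⟩
  have hc : constantCoeff T = 0 := hT.1
  have hcs : ∀ j, constantCoeff (substPow j T) = 0 := by
    intro j
    rw [← coeff_zero_eq_constantCoeff, TreeAux.coeff_substPow]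
    simp [ht0]
  have ht1 : coeff 1 T = 1 := by
    rw [hT.2 1]
    rw [show (1 : ℕ) = 0 + 1 from rfl, TreeAux.coeff_truncRHS_succ]
    simp only [TreeAux.E1, TreeAux.E2, TreeAux.S1, TreeAux.S2]
    norm_num [Finset.sum_range_succ, TreeAux.coeff_substPow, pow_succ, coeff_mul,
      Finset.Nat.sum_antidiagonal_eq_sum_range_succ_mk, map_sum, map_smul, ht0, hc, hcs, Nat.factorial]
  have ht3 : coeff 3 T = 0 := by
    rw [hT.2 3]
    rw [show (3 : ℕ) = 2 + 1 from rfl, TreeAux.coeff_truncRHS_succ]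
    simp only [TreeAux.E1, TreeAux.E2, TreeAux.S1, TreeAux.S2]
    norm_num [Finset.sum_range_succ, Finset.sum_Icc_succ_top, Finset.Icc_self,
      TreeAux.coeff_substPow, pow_succ, coeff_mul,
      Finset.Nat.sum_antidiagonal_eq_sum_range_succ_mk, map_sum, map_smul, ht0, ht1, ht2, hc, hcs, Nat.factorial]
  have ht5 : coeff 5 T = 1 := by
    rw [hT.2 5]
    rw [show (5 : ℕ) = 4 + 1 from rfl, TreeAux.coeff_truncRHS_succ]
    simp only [TreeAux.E1, TreeAux.E2, TreeAux.S1, TreeAux.S2]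
    norm_num [Finset.sum_range_succ, Finset.sum_Icc_succ_top, Finset.Icc_self,
      TreeAux.coeff_substPow, pow_succ, coeff_mul,
      Finset.Nat.sum_antidiagonal_eq_sum_range_succ_mk, map_sum, map_smul,
      ht0, ht1, ht2, ht3, ht4, hc, hcs, Nat.factorial]
  exact ⟨fun T' hT' => TreeAux.uniqueness hT hT', ht1, heven, ht5⟩
end
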